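/- Let a > 1. There exists exactly one holomorphic function ξ₁ defined on ℂ ∖ ([−z₁,−z₂] ∪ [z₂,z₁]) such that ξ₁(z)³ − z·ξ₁(z)² − (a²−1)·ξ₁(z) + z·a² = 0 for every z in the domain and ξ₁(z) − z → 0 as z → ∞. -/

import Mathlib

open MeasureTheory Filter Topology Polynomial Asymptotics

noncomputable section

/-- `√(1+8a²)` -/
def s8 (a : ℝ) : ℝ := Real.sqrt (1 + 8 * a ^ 2)

/-- the critical point `p` -/
def pBr (a : ℝ) : ℝ := Real.sqrt (1 / 2 + a ^ 2 - s8 a / 2)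

/-- the critical point `q` -/
def qBr (a : ℝ) : ℝ := Real.sqrt (1 / 2 + a ^ 2 + s8 a / 2)

/-- the right edge point `z₁` -/
def z1 (a : ℝ) : ℝ := qBr a * (s8 a + 3) / (s8 a + 1)

/-- the left edge point `z₂` of the right interval -/
def z2 (a : ℝ) : ℝ := pBr a * (s8 a - 3) / (s8 a - 1)

open scoped Classical in
/-- the Pastur density: `(1/π)|Im ξ|` for a non-real root `ξ` of the Pastur cubic, `0` else. -/
def pasturRho (a x : ℝ) : ℝ :=
  if h : ∃ ξ : ℂ, ξ ^ 3 - (x : ℂ) * ξ ^ 2 - ((a : ℂ) ^ 2 - 1) * ξ + (x : ℂ) * (a : ℂ) ^ 2 = 0 ∧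
      ξ.im ≠ 0
  then |h.choose.im| / Real.pi
  else 0

/-- the cut `[z₂, z₁]` viewed in `ℂ` -/
def cutR (a : ℝ) : Set ℂ := {z | z.im = 0 ∧ z2 a ≤ z.re ∧ z.re ≤ z1 a}

/-- the cut `[-z₁, -z₂]` viewed in `ℂ` -/
def cutL (a : ℝ) : Set ℂ := {z | z.im = 0 ∧ -z1 a ≤ z.re ∧ z.re ≤ -z2 a}

/-- `ℂ ∖ ([-z₁,-z₂] ∪ [z₂,z₁])` -/
def Omega1 (a : ℝ) : Set ℂ := (cutL a ∪ cutR a)ᶜ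

/-- `ℂ ∖ [z₂,z₁]` -/
def Omega2 (a : ℝ) : Set ℂ := (cutR a)ᶜ

/-- `ℂ ∖ [-z₁,-z₂]` -/
def Omega3 (a : ℝ) : Set ℂ := (cutL a)ᶜ

/-- the Pastur cubic at `z`, evaluated at `ξ` -/
def pasturCubic (a : ℝ) (z ξ : ℂ) : ℂ :=
  ξ ^ 3 - z * ξ ^ 2 - ((a : ℂ) ^ 2 - 1) * ξ + z * (a : ℂ) ^ 2

/-- `ξ` is the branch `ξ₁`: holomorphic on `Ω₁`, solves the Pastur cubic,
and `ξ₁(z) - z → 0` as `z → ∞`. -/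
def IsXi1 (a : ℝ) (ξ : ℂ → ℂ) : Prop :=
  DifferentiableOn ℂ ξ (Omega1 a) ∧
  (∀ z ∈ Omega1 a, pasturCubic a z (ξ z) = 0) ∧
  Tendsto (fun z : ℂ => ξ z - z) (Bornology.cobounded ℂ) (𝓝 0)

/-- `ξ` is the branch `ξ₂`: holomorphic on `Ω₂`, solves the Pastur cubic,
and `ξ₂(z) → a` as `z → ∞`. -/
def IsXi2 (a : ℝ) (ξ : ℂ → ℂ) : Prop :=
  DifferentiableOn ℂ ξ (Omega2 a) ∧
  (∀ z ∈ Omega2 a, pasturCubic a z (ξ z) = 0) ∧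
  Tendsto ξ (Bornology.cobounded ℂ) (𝓝 (a : ℂ))

/-- `ξ` is the branch `ξ₃`: holomorphic on `Ω₃`, solves the Pastur cubic,
and `ξ₃(z) → -a` as `z → ∞`. -/
def IsXi3 (a : ℝ) (ξ : ℂ → ℂ) : Prop :=
  DifferentiableOn ℂ ξ (Omega3 a) ∧
  (∀ z ∈ Omega3 a, pasturCubic a z (ξ z) = 0) ∧
  Tendsto ξ (Bornology.cobounded ℂ) (𝓝 (-(a : ℂ)))

section Numerics
variable {a : ℝ} (ha : 1 < a)
include ha

lemma s8_sq : s8 a ^ 2 = 1 + 8 * a ^ 2 := by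
  rw [s8, Real.sq_sqrt]; positivity

lemma s8_gt3 : 3 < s8 a := by
  have h : (3:ℝ) = Real.sqrt 9 := by
    rw [show (9:ℝ) = 3^2 by norm_num, Real.sqrt_sq]; norm_num
  rw [s8, h]
  apply Real.sqrt_lt_sqrt (by norm_num)
  nlinarith

lemma s8_lt : s8 a < 2 * a ^ 2 + 1 := by
  nlinarith [s8_sq ha, s8_gt3 ha]

lemma pBr_sq : pBr a ^ 2 = 1 / 2 + a ^ 2 - s8 a / 2 := by
  rw [pBr, Real.sq_sqrt]; nlinarith [s8_lt ha]

lemma qBr_sq : qBr a ^ 2 = 1 / 2 + a ^ 2 + s8 a / 2 := by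
  rw [qBr, Real.sq_sqrt]; nlinarith [s8_gt3 ha]

lemma pBr_pos : 0 < pBr a := by
  rw [pBr]; apply Real.sqrt_pos.2; nlinarith [s8_lt ha]

lemma qBr_pos : 0 < qBr a := by
  rw [qBr]; apply Real.sqrt_pos.2; nlinarith [s8_gt3 ha]

lemma pBr_lt_a : pBr a < a := by
  nlinarith [pBr_sq ha, pBr_pos ha, s8_gt3 ha]

lemma a_lt_qBr : a < qBr a := by
  nlinarith [qBr_sq ha, qBr_pos ha, s8_gt3 ha]

lemma pBr_le_qBr : pBr a ≤ qBr a := by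
  nlinarith [pBr_lt_a ha, a_lt_qBr ha, pBr_pos ha]

lemma z2_pos : 0 < z2 a := by
  rw [z2]
  have h3 := s8_gt3 ha
  exact div_pos (mul_pos (pBr_pos ha) (by linarith)) (by linarith)

lemma z1_pos : 0 < z1 a := by
  rw [z1]
  have h3 := s8_gt3 ha
  have := qBr_pos ha
  positivity

lemma z2_lt_z1 : z2 a < z1 a := by
  rw [z2, z1]
  have h3 := s8_gt3 ha
  have hp := pBr_pos ha
  have hpq := pBr_le_qBr ha
  rw [div_lt_div_iff₀ (by linarith) (by linarith)]
  have h1 : pBr a * ((s8 a - 3) * (s8 a + 1)) ≤ qBr a * ((s8 a - 3) * (s8 a + 1)) := by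
    have : (0:ℝ) ≤ (s8 a - 3) * (s8 a + 1) := by nlinarith
    exact mul_le_mul_of_nonneg_right hpq this
  have h2 : qBr a * ((s8 a - 3) * (s8 a + 1)) < qBr a * ((s8 a + 3) * (s8 a - 1)) := by
    have hq := qBr_pos ha
    nlinarith
  nlinarith [h1, h2]

/-- key identity `F(p) = z₂` in cleared form -/
lemma keyP : z2 a * (pBr a ^ 2 - a ^ 2) = pBr a * (pBr a ^ 2 - a ^ 2) + pBr a := by
  have h3 := s8_gt3 ha
  have hp2 := pBr_sq ha
  have hne : s8 a - 1 ≠ 0 := by linarith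
  rw [z2, div_mul_eq_mul_div, div_eq_iff hne]
  linear_combination (-2 * pBr a) * hp2

/-- key identity `F(q) = z₁` in cleared form -/
lemma keyQ : z1 a * (qBr a ^ 2 - a ^ 2) = qBr a * (qBr a ^ 2 - a ^ 2) + qBr a := by
  have h3 := s8_gt3 ha
  have hq2 := qBr_sq ha
  have hne : s8 a + 1 ≠ 0 := by linarith
  rw [z1, div_mul_eq_mul_div, div_eq_iff hne]
  linear_combination (2 * qBr a) * hq2

/-- product of the critical squares -/
lemma pq_sq : (pBr a * qBr a) ^ 2 = a ^ 4 - a ^ 2 := by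
  have := pBr_sq ha; have := qBr_sq ha; have := s8_sq ha
  nlinarith [this]

lemma pq_sum_sq : pBr a ^ 2 + qBr a ^ 2 = 2 * a ^ 2 + 1 := by
  have := pBr_sq ha; have := qBr_sq ha; linarith

end Numerics
/-- the region where the branch `ξ₁` lives -/
def Gset (a : ℝ) : Set ℂ := {w : ℂ | ‖w‖ ^ 2 + a ^ 2 < ‖w ^ 2 - (a : ℂ) ^ 2‖ ^ 2}

lemma isOpen_Gset (a : ℝ) : IsOpen (Gset a) := by
  apply isOpen_lt
  · fun_prop
  · fun_prop

section Alg
variable {a : ℝ} (ha : 1 < a)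
include ha

lemma d_ne_of_G {w : ℂ} (hw : w ∈ Gset a) : w ^ 2 - (a : ℂ) ^ 2 ≠ 0 := by
  intro h
  rw [Gset, Set.mem_setOf_eq, h] at hw
  simp at hw
  nlinarith [norm_nonneg w]

lemma norm_sq_d_gt {w : ℂ} (hw : w ∈ Gset a) :
    ‖w‖ ^ 2 + a ^ 2 < ‖w ^ 2 - (a : ℂ) ^ 2‖ ^ 2 := hw

/-- at most one root of the Pastur cubic lies in `Gset` -/
lemma unique_root_G {z u v : ℂ} (hu : u ∈ Gset a) (hv : v ∈ Gset a)
    (hpu : pasturCubic a z u = 0) (hpv : pasturCubic a z v = 0) : u = v := by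
  by_contra hne
  rw [pasturCubic] at hpu hpv
  have key : (u - v) * ((u ^ 2 - (a : ℂ) ^ 2) * (v ^ 2 - (a : ℂ) ^ 2)
      - (u * v + (a : ℂ) ^ 2)) = 0 := by
    linear_combination (v ^ 2 - (a : ℂ) ^ 2) * hpu - (u ^ 2 - (a : ℂ) ^ 2) * hpv
  have hD : (u ^ 2 - (a : ℂ) ^ 2) * (v ^ 2 - (a : ℂ) ^ 2) = u * v + (a : ℂ) ^ 2 := by
    rcases mul_eq_zero.1 key with h | h
    · exact absurd (sub_eq_zero.1 h) hne
    · exact sub_eq_zero.1 h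
  -- norms
  have hXY : ‖u ^ 2 - (a : ℂ) ^ 2‖ * ‖v ^ 2 - (a : ℂ) ^ 2‖ = ‖u * v + (a : ℂ) ^ 2‖ := by
    rw [← norm_mul, hD]
  have ht : ‖u * v + (a : ℂ) ^ 2‖ ≤ ‖u‖ * ‖v‖ + a ^ 2 := by
    calc ‖u * v + (a : ℂ) ^ 2‖ ≤ ‖u * v‖ + ‖(a : ℂ) ^ 2‖ := norm_add_le _ _
    _ = ‖u‖ * ‖v‖ + a ^ 2 := by
        rw [norm_mul, norm_pow, Complex.norm_real]
        rw [Real.norm_eq_abs, abs_of_pos (by linarith)]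
  have h1 := norm_sq_d_gt ha hu
  have h2 := norm_sq_d_gt ha hv
  have hm := norm_nonneg u
  have hn := norm_nonneg v
  have hX := norm_nonneg (u ^ 2 - (a : ℂ) ^ 2)
  have hY := norm_nonneg (v ^ 2 - (a : ℂ) ^ 2)
  have ht0 := norm_nonneg (u * v + (a : ℂ) ^ 2)
  nlinarith [sq_nonneg (‖u‖ - ‖v‖), sq_nonneg (‖u‖ * ‖v‖ + a ^ 2),
    mul_pos (show (0:ℝ) < ‖u‖ ^ 2 + a ^ 2 by positivity) (show (0:ℝ) < ‖v‖ ^ 2 + a ^ 2 by positivity)]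

end Alg
section ImLem
variable {a : ℝ} (ha : 1 < a)
include ha

lemma sq_ne_of_im {w : ℂ} (hw : w.im ≠ 0) : w ^ 2 - (a : ℂ) ^ 2 ≠ 0 := by
  intro h
  have h' : w ^ 2 = (a : ℂ) ^ 2 := by linear_combination h
  have him := congrArg Complex.im h'
  have hre := congrArg Complex.re h'
  simp only [pow_two, Complex.mul_im, Complex.mul_re, Complex.ofReal_re,
    Complex.ofReal_im] at him hre
  have h2 : w.re * w.im = 0 := by linarith
  have h3 : w.re = 0 := by
    rcases mul_eq_zero.1 h2 with h | h
    · exact h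
    · exact absurd h hw
  rw [h3] at hre
  nlinarith [sq_nonneg w.im]

/-- from the cubic: `(w² - a²)(z - w) = w` -/
lemma d_mul_eq {z w : ℂ} (hp : pasturCubic a z w = 0) :
    (w ^ 2 - (a : ℂ) ^ 2) * (z - w) = w := by
  rw [pasturCubic] at hp
  linear_combination -hp

/-- imaginary-part identity: `(z-w).im * |d|² = -w.im * (|w|² + a²)` -/
lemma im_identity {z w : ℂ} (hp : pasturCubic a z w = 0) :
    (z - w).im * Complex.normSq (w ^ 2 - (a : ℂ) ^ 2)
      = -(w.im * (Complex.normSq w + a ^ 2)) := by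
  have h1 := d_mul_eq ha hp
  set d := w ^ 2 - (a : ℂ) ^ 2 with hd
  have h2 : (Complex.normSq d : ℂ) * (z - w) = w * (starRingEnd ℂ) d := by
    rw [Complex.normSq_eq_conj_mul_self]
    linear_combination ((starRingEnd ℂ) d) * h1
  have h3 := congrArg Complex.im h2
  simp only [Complex.mul_im, Complex.ofReal_re, Complex.ofReal_im, zero_mul, add_zero,
    one_mul, mul_zero] at h3
  rw [mul_comm ((z - w).im), h3, hd]
  simp [Complex.mul_im, Complex.mul_re, Complex.normSq_apply, pow_two,
    Complex.sub_re, Complex.sub_im, Complex.conj_re, Complex.conj_im]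
  ring

/-- a root whose imaginary part has the same sign as `z.im` lies in `Gset` -/
lemma root_in_G_of_im {z w : ℂ} (hp : pasturCubic a z w = 0)
    (him : 0 < w.im * z.im) : w ∈ Gset a := by
  have hwim : w.im ≠ 0 := by rintro h; rw [h] at him; simp at him
  have hd : w ^ 2 - (a : ℂ) ^ 2 ≠ 0 := sq_ne_of_im ha hwim
  have hnd : 0 < Complex.normSq (w ^ 2 - (a : ℂ) ^ 2) := Complex.normSq_pos.2 hd
  have hid := im_identity ha hp
  rw [Complex.sub_im] at hid
  by_contra hG
  rw [Gset, Set.mem_setOf_eq, not_lt,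
    Complex.sq_norm, Complex.sq_norm] at hG
  set nd := Complex.normSq (w ^ 2 - (a : ℂ) ^ 2)
  set N := Complex.normSq w
  have hkey : 0 ≤ w.im ^ 2 * ((N + a ^ 2) - nd) := mul_nonneg (sq_nonneg _) (by linarith)
  have hid3 : w.im * ((z.im - w.im) * nd) = w.im * (-(w.im * (N + a ^ 2))) := by rw [hid]
  nlinarith [mul_pos him hnd, hkey, hid3]

end ImLem
section Fact
open Polynomial in
/-- the Pastur cubic has a root -/
lemma exists_cubic_root (a : ℝ) (z : ℂ) : ∃ w : ℂ, pasturCubic a z w = 0 := by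
  obtain ⟨w, hw⟩ := Complex.exists_root (f := C 1 * X ^ 3 + C (-z) * X ^ 2
      + C (-((a : ℂ) ^ 2 - 1)) * X + C (z * (a : ℂ) ^ 2))
    (by rw [Polynomial.degree_cubic one_ne_zero]; norm_num)
  refine ⟨w, ?_⟩
  have := hw
  rw [Polynomial.IsRoot, Polynomial.eval_add, Polynomial.eval_add, Polynomial.eval_add,
    Polynomial.eval_mul, Polynomial.eval_mul, Polynomial.eval_mul, Polynomial.eval_pow,
    Polynomial.eval_pow, Polynomial.eval_C, Polynomial.eval_C, Polynomial.eval_C,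
    Polynomial.eval_C, Polynomial.eval_X] at this
  rw [pasturCubic]
  linear_combination this

/-- a complex number has a square root -/
lemma exists_sqrt (c : ℂ) : ∃ s : ℂ, s ^ 2 = c := by
  by_cases hc : c = 0
  · exact ⟨0, by simp [hc]⟩
  · refine ⟨Complex.exp (Complex.log c / 2), ?_⟩
    rw [← Complex.exp_nat_mul]
    push_cast
    rw [show (2 : ℂ) * (Complex.log c / 2) = Complex.log c by ring, Complex.exp_log hc]

/-- the three roots of the Pastur cubic -/
lemma exists_three_roots (a : ℝ) (z : ℂ) :
    ∃ r₁ r₂ r₃ : ℂ, r₁ + r₂ + r₃ = z ∧ pasturCubic a z r₁ = 0 ∧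
      pasturCubic a z r₂ = 0 ∧ pasturCubic a z r₃ = 0 := by
  obtain ⟨r₁, hr₁⟩ := exists_cubic_root a z
  obtain ⟨s, hs⟩ := exists_sqrt ((r₁ - z) ^ 2 - 4 * (r₁ ^ 2 - z * r₁ - ((a : ℂ) ^ 2 - 1)))
  set B := r₁ - z
  set Cq := r₁ ^ 2 - z * r₁ - ((a : ℂ) ^ 2 - 1) with hCq
  refine ⟨r₁, (-B + s) / 2, (-B - s) / 2, by ring, hr₁, ?_, ?_⟩
  · have hQ : ((-B + s) / 2) ^ 2 + B * ((-B + s) / 2) + Cq = 0 := by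
      linear_combination hs / 4
    rw [pasturCubic] at hr₁ ⊢
    linear_combination hr₁ + ((-B + s) / 2 - r₁) * hQ
  · have hQ : ((-B - s) / 2) ^ 2 + B * ((-B - s) / 2) + Cq = 0 := by
      linear_combination hs / 4
    rw [pasturCubic] at hr₁ ⊢
    linear_combination hr₁ + ((-B - s) / 2 - r₁) * hQ

/-- existence of a root in `Gset` for non-real `z` -/
lemma exists_root_G_of_im {a : ℝ} (ha : 1 < a) {z : ℂ} (hz : z.im ≠ 0) :
    ∃ w ∈ Gset a, pasturCubic a z w = 0 := by
  obtain ⟨r₁, r₂, r₃, hsum, h1, h2, h3⟩ := exists_three_roots a z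
  have hims : r₁.im + r₂.im + r₃.im = z.im := by
    have := congrArg Complex.im hsum
    simpa [Complex.add_im] using this
  have hpos : 0 < r₁.im * z.im ∨ 0 < r₂.im * z.im ∨ 0 < r₃.im * z.im := by
    by_contra h
    push_neg at h
    obtain ⟨e1, e2, e3⟩ := h
    have hzz : 0 < z.im ^ 2 := by positivity
    have hk : (r₁.im + r₂.im + r₃.im) * z.im = z.im ^ 2 := by rw [hims]; ring
    nlinarith [hk, hzz]
  rcases hpos with h | h | h
  · exact ⟨r₁, root_in_G_of_im ha h1 h, h1⟩
  · exact ⟨r₂, root_in_G_of_im ha h2 h, h2⟩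
  · exact ⟨r₃, root_in_G_of_im ha h3 h, h3⟩

end Fact
section RealCase
variable {a : ℝ} (ha : 1 < a)
include ha

lemma real_mem_G {t : ℝ} (h : 0 < (t ^ 2 - pBr a ^ 2) * (t ^ 2 - qBr a ^ 2)) :
    ((t : ℝ) : ℂ) ∈ Gset a := by
  rw [Gset, Set.mem_setOf_eq]
  have h1 : ((t : ℂ)) ^ 2 - (a : ℂ) ^ 2 = (((t ^ 2 - a ^ 2 : ℝ)) : ℂ) := by push_cast; ring
  rw [h1, Complex.norm_real, Complex.norm_real, Real.norm_eq_abs, Real.norm_eq_abs,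
    sq_abs, sq_abs]
  have key : (t ^ 2 - a ^ 2) ^ 2 - (t ^ 2 + a ^ 2)
      = (t ^ 2 - pBr a ^ 2) * (t ^ 2 - qBr a ^ 2) := by
    linear_combination (t ^ 2 : ℝ) * (pq_sum_sq ha) - (pq_sq ha)
  linarith [key, h]

lemma exists_root_G_of_real {z : ℂ} (hz : z.im = 0) (hΩ : z ∈ Omega1 a) :
    ∃ w ∈ Gset a, pasturCubic a z w = 0 := by
  set x := z.re with hx
  have hzx : z = (x : ℂ) := by
    apply Complex.ext <;> simp [hz, hx]
  set g : ℝ → ℝ := fun t => (t ^ 2 - a ^ 2) * (t - x) + t with hg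
  have hcont : Continuous g := by fun_prop
  have hroot : ∀ t : ℝ, g t = 0 → pasturCubic a z (t : ℂ) = 0 := by
    intro t ht
    rw [hzx, pasturCubic]
    have h2 : ((g t : ℝ) : ℂ) = 0 := by rw [ht]; simp
    rw [hg] at h2; push_cast at h2
    linear_combination h2
  have hnotL : ¬(-z1 a ≤ x ∧ x ≤ -z2 a) := fun hc => hΩ (Or.inl ⟨hz, hc.1, hc.2⟩)
  have hnotR : ¬(z2 a ≤ x ∧ x ≤ z1 a) := fun hc => hΩ (Or.inr ⟨hz, hc.1, hc.2⟩)
  have hp2 := pBr_sq ha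
  have hq2 := qBr_sq ha
  have hs3 := s8_gt3 ha
  have hppos := pBr_pos ha
  have hqpos := qBr_pos ha
  have hpq := pBr_le_qBr ha
  have hz1 := z1_pos ha
  have hz2 := z2_pos ha
  have hz21 := z2_lt_z1 ha
  have hpa2 : pBr a ^ 2 - a ^ 2 < 0 := by nlinarith
  have hqa2 : 0 < qBr a ^ 2 - a ^ 2 := by nlinarith
  by_cases hR : z1 a < x
  · -- root in (q, M]
    set M := x + a + qBr a + 1 with hM
    have hqM : qBr a ≤ M := by linarith
    have hgq : g (qBr a) = (qBr a ^ 2 - a ^ 2) * (z1 a - x) := by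
      show (qBr a ^ 2 - a ^ 2) * (qBr a - x) + qBr a = _
      linear_combination -(keyQ ha)
    have hgqneg : g (qBr a) < 0 := by rw [hgq]; exact mul_neg_of_pos_of_neg hqa2 (by linarith)
    have hgM : 0 < g M := by
      show 0 < (M ^ 2 - a ^ 2) * (M - x) + M
      have h1 : a < M := by linarith
      have h2 : (0:ℝ) < M ^ 2 - a ^ 2 := by
        have := pow_lt_pow_left₀ h1 (by linarith : (0:ℝ) ≤ a) (two_ne_zero)
        linarith
      have h3 : (0:ℝ) < M - x := by linarith
      have h4 : (0:ℝ) < M := by linarith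
      linarith [mul_pos h2 h3]
    obtain ⟨t, htmem, hgt⟩ := (intermediate_value_Icc hqM hcont.continuousOn)
      ⟨hgqneg.le, hgM.le⟩
    have htq : qBr a < t := by
      rcases lt_or_eq_of_le htmem.1 with h | h
      · exact h
      · exfalso; rw [← h] at hgt; exact absurd hgt (ne_of_lt hgqneg)
    refine ⟨(t : ℂ), real_mem_G ha ?_, hroot t hgt⟩
    have hq2t : qBr a ^ 2 < t ^ 2 := pow_lt_pow_left₀ htq hqpos.le two_ne_zero
    have hp2t : pBr a ^ 2 ≤ qBr a ^ 2 := pow_le_pow_left₀ hppos.le hpq 2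
    exact mul_pos (by linarith) (by linarith)
  · by_cases hL : x < -z1 a
    · -- root in [-M, -q)
      set M := -x + a + qBr a + 1 with hM
      have hqM : -M ≤ -qBr a := by linarith
      have hgq : g (-qBr a) = (qBr a ^ 2 - a ^ 2) * (-z1 a - x) := by
        show ((-qBr a) ^ 2 - a ^ 2) * (-qBr a - x) + (-qBr a) = _
        linear_combination keyQ ha
      have hgqpos : 0 < g (-qBr a) := by rw [hgq]; exact mul_pos hqa2 (by linarith)
      have hgM : g (-M) < 0 := by
        show ((-M) ^ 2 - a ^ 2) * (-M - x) + (-M) < 0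
        have h1 : a < M := by linarith
        have h2 : (0:ℝ) < M ^ 2 - a ^ 2 := by
          have := pow_lt_pow_left₀ h1 (by linarith : (0:ℝ) ≤ a) (two_ne_zero)
          linarith
        have h3 : (0:ℝ) < M + x := by linarith
        have h4 : (0:ℝ) < M := by linarith
        linarith [mul_pos h2 h3]
      obtain ⟨t, htmem, hgt⟩ := (intermediate_value_Icc hqM hcont.continuousOn)
        ⟨hgM.le, hgqpos.le⟩
      have htq : t < -qBr a := by
        rcases lt_or_eq_of_le htmem.2 with h | h
        · exact h
        · exfalso; rw [h] at hgt; exact absurd hgt (ne_of_gt hgqpos)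
      refine ⟨(t : ℂ), real_mem_G ha ?_, hroot t hgt⟩
      have hq2t : qBr a ^ 2 < t ^ 2 := by
        have h5 : qBr a < -t := by linarith
        have := pow_lt_pow_left₀ h5 hqpos.le two_ne_zero
        rw [neg_pow] at this
        simpa using this
      have hp2t : pBr a ^ 2 ≤ qBr a ^ 2 := pow_le_pow_left₀ hppos.le hpq 2
      exact mul_pos (by linarith) (by linarith)
    · -- middle gap : -z2 < x < z2
      push_neg at hL
      have hxlt : x < z2 a := by
        by_contra h
        push_neg at h
        exact hnotR ⟨h, by linarith⟩
      have hxgt : -z2 a < x := by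
        by_contra h
        push_neg at h
        exact hnotL ⟨by linarith, h⟩
      have hgp : g (pBr a) = (pBr a ^ 2 - a ^ 2) * (z2 a - x) := by
        show (pBr a ^ 2 - a ^ 2) * (pBr a - x) + pBr a = _
        linear_combination -(keyP ha)
      have hgmp : g (-pBr a) = (pBr a ^ 2 - a ^ 2) * (-z2 a - x) := by
        show ((-pBr a) ^ 2 - a ^ 2) * (-pBr a - x) + (-pBr a) = _
        linear_combination keyP ha
      have hgppos : g (pBr a) < 0 := by
        rw [hgp]; exact mul_neg_of_neg_of_pos hpa2 (by linarith)
      have hgmppos : 0 < g (-pBr a) := by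
        rw [hgmp]; exact mul_pos_of_neg_of_neg hpa2 (by linarith)
      obtain ⟨t, htmem, hgt⟩ := (intermediate_value_Icc' (by linarith : -pBr a ≤ pBr a)
        hcont.continuousOn) ⟨hgppos.le, hgmppos.le⟩
      have ht1 : -pBr a < t := by
        rcases lt_or_eq_of_le htmem.1 with h | h
        · exact h
        · exfalso; rw [← h] at hgt; exact absurd hgt (ne_of_gt hgmppos)
      have ht2 : t < pBr a := by
        rcases lt_or_eq_of_le htmem.2 with h | h
        · exact h
        · exfalso; rw [h] at hgt; exact absurd hgt (ne_of_lt hgppos)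
      refine ⟨(t : ℂ), real_mem_G ha ?_, hroot t hgt⟩
      have h1 : t ^ 2 < pBr a ^ 2 := sq_lt_sq' ht1 ht2
      have hp2t : pBr a ^ 2 ≤ qBr a ^ 2 := pow_le_pow_left₀ hppos.le hpq 2
      exact mul_pos_of_neg_of_neg (by linarith) (by linarith)

/-- existence and uniqueness of the `Gset` root on `Omega1` -/
lemma exists_unique_root_G {z : ℂ} (hΩ : z ∈ Omega1 a) :
    ∃ w, w ∈ Gset a ∧ pasturCubic a z w = 0 := by
  by_cases hz : z.im = 0
  · obtain ⟨w, h1, h2⟩ := exists_root_G_of_real ha hz hΩ; exact ⟨w, h1, h2⟩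
  · obtain ⟨w, h1, h2⟩ := exists_root_G_of_im ha hz; exact ⟨w, h1, h2⟩

end RealCase
/-- the rational map whose inverse is `ξ₁` -/
def Fm (a : ℝ) : ℂ → ℂ := fun w => w + w / (w ^ 2 - (a : ℂ) ^ 2)

section FmSec
variable {a : ℝ} (ha : 1 < a)
include ha

lemma F_eq_of_root {z w : ℂ} (hw : w ∈ Gset a) (hr : pasturCubic a z w = 0) :
    Fm a w = z := by
  have hd := d_ne_of_G ha hw
  have h1 := d_mul_eq ha hr
  rw [Fm]
  field_simp
  linear_combination -h1

lemma root_of_F_eq {z w : ℂ} (hw : w ∈ Gset a) (hF : Fm a w = z) :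
    pasturCubic a z w = 0 := by
  have hd := d_ne_of_G ha hw
  rw [Fm] at hF
  field_simp at hF
  rw [pasturCubic]
  linear_combination hF

lemma F_hasStrictDerivAt {w : ℂ} (hw : w ∈ Gset a) :
    HasStrictDerivAt (Fm a)
      (1 + (1 * (w ^ 2 - (a : ℂ) ^ 2) - w * (2 * w)) / (w ^ 2 - (a : ℂ) ^ 2) ^ 2) w := by
  have hd := d_ne_of_G ha hw
  have h1 : HasStrictDerivAt (fun w : ℂ => w) 1 w := hasStrictDerivAt_id w
  have h2 : HasStrictDerivAt (fun w : ℂ => w ^ 2 - (a : ℂ) ^ 2) (2 * w) w := by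
    have h : HasStrictDerivAt (fun w : ℂ => w ^ 2 - (a : ℂ) ^ 2) (((2 : ℕ) : ℂ) * w ^ (2 - 1) - 0) w :=
      (hasStrictDerivAt_pow 2 w).sub (hasStrictDerivAt_const (x := w) (c := (a : ℂ) ^ 2))
    simpa using h
  exact h1.add (h1.div h2 hd)

lemma F_deriv_ne {w : ℂ} (hw : w ∈ Gset a) :
    (1 + (1 * (w ^ 2 - (a : ℂ) ^ 2) - w * (2 * w)) / (w ^ 2 - (a : ℂ) ^ 2) ^ 2) ≠ 0 := by
  have hd := d_ne_of_G ha hw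
  intro h
  have heq : (w ^ 2 - (a : ℂ) ^ 2) ^ 2 = w ^ 2 + (a : ℂ) ^ 2 := by
    field_simp at h
    linear_combination h
  have hnorm := congrArg norm heq
  rw [norm_pow] at hnorm
  have hle : ‖w ^ 2 + (a : ℂ) ^ 2‖ ≤ ‖w‖ ^ 2 + a ^ 2 := by
    calc ‖w ^ 2 + (a : ℂ) ^ 2‖ ≤ ‖w ^ 2‖ + ‖(a : ℂ) ^ 2‖ := norm_add_le _ _
    _ = ‖w‖ ^ 2 + a ^ 2 := by
        rw [norm_pow, norm_pow, Complex.norm_real, Real.norm_eq_abs,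
          abs_of_pos (by linarith)]
  have hG := norm_sq_d_gt ha hw
  rw [hnorm] at hG
  nlinarith [norm_nonneg w]

end FmSec

open Classical in
/-- the branch `ξ₁`, defined as the unique root of the Pastur cubic in `Gset` -/
def xi1Fun (a : ℝ) : ℂ → ℂ := fun z =>
  if h : ∃ w, w ∈ Gset a ∧ pasturCubic a z w = 0 then h.choose else z

lemma xi1Fun_spec {a : ℝ} (ha : 1 < a) {z : ℂ} (hz : z ∈ Omega1 a) :
    xi1Fun a z ∈ Gset a ∧ pasturCubic a z (xi1Fun a z) = 0 := by
  have hex := exists_unique_root_G ha hz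
  rw [xi1Fun, dif_pos hex]
  exact hex.choose_spec
lemma isClosed_cutR (a : ℝ) : IsClosed (cutR a) := by
  have : cutR a = Complex.im ⁻¹' {0} ∩ (Complex.re ⁻¹' Set.Icc (z2 a) (z1 a)) := by
    ext z; simp [cutR, Set.mem_Icc]
  rw [this]
  exact (isClosed_singleton.preimage Complex.continuous_im).inter
    (isClosed_Icc.preimage Complex.continuous_re)

lemma isClosed_cutL (a : ℝ) : IsClosed (cutL a) := by
  have : cutL a = Complex.im ⁻¹' {0} ∩ (Complex.re ⁻¹' Set.Icc (-z1 a) (-z2 a)) := by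
    ext z; simp [cutL, Set.mem_Icc]
  rw [this]
  exact (isClosed_singleton.preimage Complex.continuous_im).inter
    (isClosed_Icc.preimage Complex.continuous_re)

lemma isOpen_Omega1 (a : ℝ) : IsOpen (Omega1 a) :=
  ((isClosed_cutL a).union (isClosed_cutR a)).isOpen_compl

lemma mem_Omega1_of_big {a : ℝ} (ha : 1 < a) {z : ℂ} (hz : z1 a < ‖z‖) :
    z ∈ Omega1 a := by
  intro hmem
  have hz2 := z2_pos ha
  have hz21 := z2_lt_z1 ha
  have him : z.im = 0 := by rcases hmem with h | h <;> exact h.1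
  have habs : ‖z‖ ≤ |z.re| := by
    have := Complex.norm_le_abs_re_add_abs_im z
    rw [him] at this
    simpa using this
  rcases hmem with h | h
  · obtain ⟨-, h1, h2⟩ := h
    have : |z.re| ≤ z1 a := abs_le.2 ⟨by linarith, by linarith⟩
    linarith
  · obtain ⟨-, h1, h2⟩ := h
    have : |z.re| ≤ z1 a := abs_le.2 ⟨by linarith, by linarith⟩
    linarith

lemma xi1Fun_differentiableOn {a : ℝ} (ha : 1 < a) :
    DifferentiableOn ℂ (xi1Fun a) (Omega1 a) := by
  intro z₀ hz₀
  apply DifferentiableAt.differentiableWithinAt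
  obtain ⟨hG₀, hr₀⟩ := xi1Fun_spec ha hz₀
  set w₀ := xi1Fun a z₀
  have hF := F_hasStrictDerivAt ha hG₀
  have hne := F_deriv_ne ha hG₀
  set F' := (1 + (1 * (w₀ ^ 2 - (a : ℂ) ^ 2) - w₀ * (2 * w₀)) / (w₀ ^ 2 - (a : ℂ) ^ 2) ^ 2)
  have hFz : Fm a w₀ = z₀ := F_eq_of_root ha hG₀ hr₀
  have H := hF.hasStrictFDerivAt_equiv hne
  set g : ℂ → ℂ := H.localInverse (Fm a) _ w₀ with hg
  have hgd : HasStrictDerivAt g F'⁻¹ z₀ := by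
    have := hF.to_localInverse (hf' := hne)
    rwa [hFz] at this
  have hgz₀ : g z₀ = w₀ := by
    have := H.localInverse_apply_image
    rwa [hFz] at this
  have hcont : ContinuousAt g z₀ := by
    have := H.localInverse_continuousAt
    rwa [hFz] at this
  have hri : ∀ᶠ y in 𝓝 z₀, Fm a (g y) = y := by
    have := H.eventually_right_inverse
    rwa [hFz] at this
  have hinG : ∀ᶠ y in 𝓝 z₀, g y ∈ Gset a := by
    have : Gset a ∈ 𝓝 (g z₀) := (isOpen_Gset a).mem_nhds (by rwa [hgz₀])
    exact hcont this
  have hΩ : ∀ᶠ y in 𝓝 z₀, y ∈ Omega1 a := (isOpen_Omega1 a).mem_nhds hz₀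
  have heq : ∀ᶠ y in 𝓝 z₀, xi1Fun a y = g y := by
    filter_upwards [hri, hinG, hΩ] with y h1 h2 h3
    obtain ⟨hG', hr'⟩ := xi1Fun_spec ha h3
    exact unique_root_G ha hG' h2 hr' (root_of_F_eq ha h2 h1)
  exact (hgd.hasDerivAt.differentiableAt.congr_of_eventuallyEq heq)
lemma xi1Fun_tendsto {a : ℝ} (ha : 1 < a) :
    Tendsto (fun z : ℂ => xi1Fun a z - z) (Bornology.cobounded ℂ) (𝓝 0) := by
  rw [Metric.tendsto_nhds]
  intro ε hε
  filter_upwards [eventually_cobounded_le_norm (max (z1 a + 1) (a + 2 + 1 / ε))] with z hz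
  rw [dist_zero_right]
  have hz1R : z1 a < ‖z‖ := by
    have := le_max_left (z1 a + 1) (a + 2 + 1 / ε)
    linarith
  have hΩ := mem_Omega1_of_big ha hz1R
  obtain ⟨hG, hr⟩ := xi1Fun_spec ha hΩ
  set w := xi1Fun a z with hw
  have hd := d_ne_of_G ha hG
  have h1 := d_mul_eq ha hr
  have hnorm : ‖w ^ 2 - (a : ℂ) ^ 2‖ * ‖z - w‖ = ‖w‖ := by rw [← norm_mul, h1]
  have hGn := norm_sq_d_gt ha hG
  set D := ‖w ^ 2 - (a : ℂ) ^ 2‖ with hD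
  set s := ‖w‖ with hs
  have hD0 : 0 < D := norm_pos_iff.2 hd
  have hs0 : 0 ≤ s := norm_nonneg w
  have hsD : s < D := by nlinarith
  have h2 : ‖z - w‖ = s / D := by
    rw [eq_div_iff hD0.ne']
    linarith [hnorm]
  have hzw1 : ‖z - w‖ < 1 := by rw [h2]; exact (div_lt_one hD0).2 hsD
  have hsz : ‖z‖ - 1 < s := by
    have h3 := norm_add_le (z - w) w
    simp only [sub_add_cancel] at h3
    linarith
  have hsbig : a + 1 + 1 / ε ≤ s := by
    have := le_max_right (z1 a + 1) (a + 2 + 1 / ε)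
    linarith
  have hD2 : s ^ 2 - a ^ 2 ≤ D := by
    have h4 := norm_sub_norm_le (w ^ 2) ((a : ℂ) ^ 2)
    simp only [norm_pow, Complex.norm_real, Real.norm_eq_abs] at h4
    rw [abs_of_pos (by linarith : (0:ℝ) < a)] at h4
    linarith
  rw [norm_sub_rev z w] at h2
  rw [h2, div_lt_iff₀ hD0]
  have hu : 1 / ε * ε = 1 := one_div_mul_cancel hε.ne'
  have hu0 : 0 < 1 / ε := by positivity
  have key : s < ε * (s ^ 2 - a ^ 2) := by
    nlinarith [mul_nonneg (mul_nonneg (by linarith : (0:ℝ) ≤ s - a - 1 - 1 / ε) hε.le)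
      (by linarith : (0:ℝ) ≤ s + a), hu, hε.le]
  have : ε * (s ^ 2 - a ^ 2) ≤ ε * D := mul_le_mul_of_nonneg_left hD2 hε.le
  linarith
lemma mem_Omega1_of_im {a : ℝ} {z : ℂ} (hz : z.im ≠ 0) : z ∈ Omega1 a := by
  rintro (h | h) <;> exact hz h.1

/-- the slit region: complement of the real ray `re ≤ z1` -/
lemma isPreconnected_slit {a : ℝ} (ha : 1 < a) :
    IsPreconnected (({z : ℂ | 0 < z.im} ∪ {z : ℂ | z1 a < z.re}) ∪ {z : ℂ | z.im < 0}) := by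
  have hA : IsPreconnected ({z : ℂ | 0 < z.im} ∪ {z : ℂ | z1 a < z.re}) := by
    apply IsPreconnected.union (((z1 a + 1 : ℝ) : ℂ) + Complex.I)
    · show (0:ℝ) < (((z1 a + 1 : ℝ) : ℂ) + Complex.I).im
      simp
    · show z1 a < (((z1 a + 1 : ℝ) : ℂ) + Complex.I).re
      simp
    · exact (convex_halfSpace_im_gt 0).isPreconnected
    · exact (convex_halfSpace_re_gt (z1 a)).isPreconnected
  apply IsPreconnected.union (((z1 a + 1 : ℝ) : ℂ) - Complex.I)
  · right
    show z1 a < (((z1 a + 1 : ℝ) : ℂ) - Complex.I).re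
    simp
  · show (((z1 a + 1 : ℝ) : ℂ) - Complex.I).im < 0
    simp
  · exact hA
  · exact (convex_halfSpace_im_lt 0).isPreconnected

lemma slit_subset_Omega1 {a : ℝ} (ha : 1 < a) :
    (({z : ℂ | 0 < z.im} ∪ {z : ℂ | z1 a < z.re}) ∪ {z : ℂ | z.im < 0}) ⊆ Omega1 a := by
  have hz2 := z2_pos ha
  have hz21 := z2_lt_z1 ha
  rintro z ((hz | hz) | hz)
  · exact mem_Omega1_of_im (by simp at hz ⊢; linarith)
  · rintro (h | h)
    · obtain ⟨-, h1, h2⟩ := h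
      simp only [Set.mem_setOf_eq] at hz
      linarith
    · obtain ⟨-, h1, h2⟩ := h
      simp only [Set.mem_setOf_eq] at hz
      linarith
  · exact mem_Omega1_of_im (by simp at hz ⊢; linarith)

lemma isPreconnected_Omega1 {a : ℝ} (ha : 1 < a) : IsPreconnected (Omega1 a) := by
  apply isPreconnected_of_forall (Complex.I)
  intro y hy
  by_cases hyim : y.im = 0
  · obtain ⟨ε, hε, hball⟩ := Metric.isOpen_iff.1 (isOpen_Omega1 a) y hy
    refine ⟨{z : ℂ | 0 < z.im} ∪ Metric.ball y ε, ?_, ?_, ?_, ?_⟩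
    · rintro z (hz | hz)
      · exact mem_Omega1_of_im (by simp only [Set.mem_setOf_eq] at hz; linarith)
      · exact hball hz
    · left; show (0:ℝ) < Complex.I.im; simp
    · right; exact Metric.mem_ball_self hε
    · apply IsPreconnected.union (y + (ε / 2) • Complex.I)
      · show (0:ℝ) < (y + (ε / 2) • Complex.I).im
        simp [Complex.add_im, Complex.smul_im, hyim]
        positivity
      · rw [Metric.mem_ball, dist_eq_norm]
        simp only [add_sub_cancel_left]
        rw [norm_smul, Complex.norm_I, mul_one, Real.norm_eq_abs,
          abs_of_pos (by positivity : (0:ℝ) < ε / 2)]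
        linarith
      · exact (convex_halfSpace_im_gt 0).isPreconnected
      · exact (convex_ball y ε).isPreconnected
  · refine ⟨_, slit_subset_Omega1 ha, ?_, ?_, isPreconnected_slit ha⟩
    · left; left
      show (0:ℝ) < Complex.I.im
      simp
    · rcases lt_or_gt_of_ne hyim with h | h
      · right; exact h
      · left; left; exact h
lemma roots_eq_of_big {a : ℝ} (ha : 1 < a) {z u v : ℂ} (hz : a + 4 ≤ ‖z‖)
    (hu : pasturCubic a z u = 0) (hv : pasturCubic a z v = 0)
    (h1 : ‖u - z‖ < 1 / 2) (h2 : ‖v - z‖ < 1 / 2) : u = v := by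
  by_contra hne
  have key : (u - v) * ((u - z) ^ 2 + (u - z) * (v - z) + (v - z) ^ 2
      + 2 * z * ((u - z) + (v - z)) + z ^ 2 - ((a : ℂ) ^ 2 - 1)) = 0 := by
    rw [pasturCubic] at hu hv
    linear_combination hu - hv
  have hrel : (u - z) ^ 2 + (u - z) * (v - z) + (v - z) ^ 2
      + 2 * z * ((u - z) + (v - z)) + z ^ 2 - ((a : ℂ) ^ 2 - 1) = 0 := by
    rcases mul_eq_zero.1 key with h | h
    · exact absurd (sub_eq_zero.1 h) hne
    · exact h
  set α := u - z with hα
  set β := v - z with hβ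
  have hz2 : z ^ 2 = ((a : ℂ) ^ 2 - 1) - 2 * z * (α + β) - (α ^ 2 + α * β + β ^ 2) := by
    linear_combination hrel
  have e1 : ‖(a : ℂ) ^ 2 - 1‖ = a ^ 2 - 1 := by
    rw [show (a : ℂ) ^ 2 - 1 = ((a ^ 2 - 1 : ℝ) : ℂ) by push_cast; ring,
      Complex.norm_real, Real.norm_eq_abs, abs_of_pos (by nlinarith)]
  have hab : ‖α + β‖ ≤ 1 := le_trans (norm_add_le _ _) (by linarith)
  have e2 : ‖2 * z * (α + β)‖ ≤ 2 * ‖z‖ := by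
    calc ‖2 * z * (α + β)‖ = 2 * ‖z‖ * ‖α + β‖ := by
          rw [norm_mul, norm_mul]; norm_num
    _ ≤ 2 * ‖z‖ * 1 := mul_le_mul_of_nonneg_left hab (by positivity)
    _ = 2 * ‖z‖ := by ring
  have e3 : ‖α ^ 2 + α * β + β ^ 2‖ ≤ 1 := by
    have t1 : ‖α ^ 2 + α * β + β ^ 2‖ ≤ ‖α‖ ^ 2 + ‖α‖ * ‖β‖ + ‖β‖ ^ 2 := by
      calc ‖α ^ 2 + α * β + β ^ 2‖ ≤ ‖α ^ 2 + α * β‖ + ‖β ^ 2‖ := norm_add_le _ _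
      _ ≤ ‖α ^ 2‖ + ‖α * β‖ + ‖β ^ 2‖ := by linarith [norm_add_le (α ^ 2) (α * β)]
      _ = ‖α‖ ^ 2 + ‖α‖ * ‖β‖ + ‖β‖ ^ 2 := by rw [norm_pow, norm_pow, norm_mul]
    nlinarith [norm_nonneg α, norm_nonneg β]
  have hb : ‖z‖ ^ 2 ≤ (a ^ 2 - 1) + 2 * ‖z‖ + 1 := by
    calc ‖z‖ ^ 2 = ‖z ^ 2‖ := (norm_pow z 2).symm
    _ = ‖((a : ℂ) ^ 2 - 1) - 2 * z * (α + β) - (α ^ 2 + α * β + β ^ 2)‖ := by rw [hz2]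
    _ ≤ ‖((a : ℂ) ^ 2 - 1) - 2 * z * (α + β)‖ + ‖α ^ 2 + α * β + β ^ 2‖ := norm_sub_le _ _
    _ ≤ ‖(a : ℂ) ^ 2 - 1‖ + ‖2 * z * (α + β)‖ + ‖α ^ 2 + α * β + β ^ 2‖ := by
        linarith [norm_sub_le ((a : ℂ) ^ 2 - 1) (2 * z * (α + β))]
    _ ≤ (a ^ 2 - 1) + 2 * ‖z‖ + 1 := by rw [e1]; linarith
  nlinarith [sq_nonneg (‖z‖ - (a + 4))]
/-- For `a > 1` there is exactly one holomorphic function `ξ₁` on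
`ℂ ∖ ([-z₁,-z₂] ∪ [z₂,z₁])` solving the Pastur cubic with `ξ₁(z) - z → 0` as `z → ∞`. -/
theorem statement8 (a : ℝ) (ha : 1 < a) :
    (∃ ξ : ℂ → ℂ, IsXi1 a ξ) ∧
    ∀ ξ η : ℂ → ℂ, IsXi1 a ξ → IsXi1 a η → Set.EqOn ξ η (Omega1 a) := by
  constructor
  · exact ⟨xi1Fun a, xi1Fun_differentiableOn ha,
      fun z hz => (xi1Fun_spec ha hz).2, xi1Fun_tendsto ha⟩
  · intro ξ η hξ hη
    have hopen := isOpen_Omega1 a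
    have hAξ : AnalyticOnNhd ℂ ξ (Omega1 a) := hξ.1.analyticOnNhd hopen
    have hAη : AnalyticOnNhd ℂ η (Omega1 a) := hη.1.analyticOnNhd hopen
    have h1 := Metric.tendsto_nhds.1 hξ.2.2 (1 / 2) (by norm_num)
    have h2 := Metric.tendsto_nhds.1 hη.2.2 (1 / 2) (by norm_num)
    have h3 := eventually_cobounded_le_norm (E := ℂ) (max (a + 4) (z1 a + 1))
    have hall : ∀ᶠ z in Bornology.cobounded ℂ, ξ z = η z := by
      filter_upwards [h1, h2, h3] with z hz1 hz2 hz3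
      rw [dist_zero_right] at hz1 hz2
      have hzΩ : z ∈ Omega1 a := mem_Omega1_of_big ha
        (by linarith [le_max_right (a + 4) (z1 a + 1)])
      exact roots_eq_of_big ha (le_trans (le_max_left _ _) hz3)
        (hξ.2.1 z hzΩ) (hη.2.1 z hzΩ) hz1 hz2
    obtain ⟨R, -, hR⟩ := (Filter.hasBasis_cobounded_norm (E := ℂ)).eventually_iff.1 hall
    set R' := max R (z1 a) with hR'
    have hR'pos : 0 < R' := lt_of_lt_of_le (z1_pos ha) (le_max_right R (z1 a))
    set z₀ : ℂ := ((R' + 1 : ℝ) : ℂ) with hz₀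
    have hz₀norm : ‖z₀‖ = R' + 1 := by
      rw [hz₀, Complex.norm_real, Real.norm_eq_abs, abs_of_pos (by linarith)]
    have hz₀Ω : z₀ ∈ Omega1 a := mem_Omega1_of_big ha
      (by rw [hz₀norm]; linarith [le_max_right R (z1 a)])
    have hev : ξ =ᶠ[𝓝 z₀] η := by
      have hopenV : IsOpen {z : ℂ | R' < ‖z‖} := isOpen_lt continuous_const continuous_norm
      apply Filter.eventuallyEq_of_mem
        (hopenV.mem_nhds (show R' < ‖z₀‖ by rw [hz₀norm]; linarith))
      intro z hzV
      exact hR (le_trans (le_max_left R (z1 a)) (le_of_lt hzV))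
    exact hAξ.eqOn_of_preconnected_of_eventuallyEq hAη (isPreconnected_Omega1 ha) hz₀Ω hev

end
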